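/- If a sequence of pairs of trajectories (τ(p_N, θ_N)) and (τ(p'_N, θ'_N)) is such that for each N both trajectories realize the initial word E₁…E_N of a fixed infinite sequence (Eᵢ), and the translation distances d(E₁…E_N) tend to infinity as N → ∞, then θ_N and θ'_N converge to a common limit. -/

import Mathlib

/-- If for each `N` the angles `θ N` and `θ' N` of two
trajectories both realize the initial word `E₁…E_N` (realization of a longer
initial word implies realization of the shorter ones), any two angles
realizing the length-`N` word differ by at most `arctan (2·diam P / d N)`, and
the translation distances `d N` tend to infinity, then `θ_N` and `θ'_N`
converge to a common limit. -/
theorem angles_converge_to_common_limit (D : ℝ) (hD : 0 ≤ D)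
    (Realizes : ℝ → ℕ → Prop) (d : ℕ → ℝ)
    (hdpos : ∀ N, 0 < d N)
    (hdtop : Filter.Tendsto d Filter.atTop Filter.atTop)
    (hmono : ∀ (φ : ℝ) (N M : ℕ), N ≤ M → Realizes φ M → Realizes φ N)
    (hbound : ∀ (φ ψ : ℝ) (N : ℕ), Realizes φ N → Realizes ψ N →
      |φ - ψ| ≤ Real.arctan (2 * D / d N))
    (θ θ' : ℕ → ℝ)
    (hθ : ∀ N, Realizes (θ N) N) (hθ' : ∀ N, Realizes (θ' N) N) :
    ∃ L : ℝ, Filter.Tendsto θ Filter.atTop (nhds L) ∧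
      Filter.Tendsto θ' Filter.atTop (nhds L) := by
  set b : ℕ → ℝ := fun N => Real.arctan (2 * D / d N) with hb
  have hb0 : Filter.Tendsto b Filter.atTop (nhds 0) := by
    have h1 : Filter.Tendsto (fun N => 2 * D / d N) Filter.atTop (nhds 0) :=
      Filter.Tendsto.div_atTop tendsto_const_nhds hdtop
    have := (Real.continuous_arctan.tendsto 0).comp h1
    rw [Real.arctan_zero] at this
    exact this
  have hcauchy : CauchySeq θ := by
    apply cauchySeq_of_le_tendsto_0 b _ hb0
    intro n m N hn hm
    have h1 : Realizes (θ n) N := hmono _ N n hn (hθ n)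
    have h2 : Realizes (θ m) N := hmono _ N m hm (hθ m)
    simpa [Real.dist_eq] using hbound _ _ N h1 h2
  obtain ⟨L, hL⟩ := cauchySeq_tendsto_of_complete hcauchy
  refine ⟨L, hL, ?_⟩
  apply hL.congr_dist
  have hdist : ∀ n, dist (θ n) (θ' n) ≤ b n := fun n => by
    simpa [Real.dist_eq] using hbound _ _ n (hθ n) (hθ' n)
  exact squeeze_zero (fun n => dist_nonneg) hdist hb0
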